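/- arXiv:1301.6804 — 2 statements merged into one kernel-verified Lean document; each statement's English description precedes it below -/
import Mathlib

section
/- (Unwinding II) Let ε_s, ε_o, ε_l ≥ 0 and let t ≥ 0 be a natural number. Suppose that for each agent a ∈ A there is a pseudo-distance δ_a on reachable density operators (symmetric, nonnegative, zero on the diagonal, satisfying the triangle inequality) such that: (approximate step consistency) δ_a(𝓔_{b,c}(ρ), 𝓔_{b,c}(σ)) ≤ δ_a(ρ,σ) + ε_s for all b ∈ A, c ∈ C, and reachable ρ, σ; (approximate observation consistency) d_a(ρ,σ) ≤ δ_a(ρ,σ) + ε_o for all reachable ρ, σ; and (approximate local respect of ↝) if ¬(b ↝ a) then δ_a(ρ, 𝓔_{b,c}(ρ)) ≤ ε_l for all c ∈ C and reachable ρ. Then K_t(𝕊,↝) ≤ ε_o + t·max{ε_s, ε_l}. -/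
open scoped Classical ComplexOrder
open Matrix Kronecker

noncomputable section

/-- A density operator: positive semidefinite with trace 1. -/
def IsDensity {d : Type} [Fintype d] [DecidableEq d] (ρ : Matrix d d ℂ) : Prop :=
  ρ.PosSemidef ∧ ρ.trace = 1

/-- A super-operator: a linear, positive, trace-preserving map on matrices. -/
def IsSuperOp {d : Type} [Fintype d] [DecidableEq d]
    (F : Matrix d d ℂ → Matrix d d ℂ) : Prop :=
  IsLinearMap ℂ F ∧ (∀ ρ : Matrix d d ℂ, ρ.PosSemidef → (F ρ).PosSemidef) ∧
    (∀ ρ : Matrix d d ℂ, (F ρ).trace = ρ.trace)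

/-- A finite family of matrices (the data of a measurement). -/
structure PMeas (d : Type) where
  m : ℕ
  E : Fin m → Matrix d d ℂ

/-- The family is a POVM: positive semidefinite elements summing to the identity. -/
def PMeas.IsPOVM {d : Type} [Fintype d] [DecidableEq d] (P : PMeas d) : Prop :=
  (∀ i, (P.E i).PosSemidef) ∧ ∑ i, P.E i = 1

/-- The distance between outcome distributions of a measurement on two states. -/
def dE {d : Type} [Fintype d] (P : PMeas d) (ρ σ : Matrix d d ℂ) : ℝ :=
  (1 / 2) * ∑ i, ‖(P.E i * ρ).trace - (P.E i * σ).trace‖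

/-- The measurement pseudo-distance induced by a set of measurements. -/
def dM {d : Type} [Fintype d] (M : Set (PMeas d)) (ρ σ : Matrix d d ℂ) : ℝ :=
  sSup { x | ∃ P ∈ M, x = dE P ρ σ }

/-- A quantum system: initial state, agents, commands, super-operators, measurements. -/
structure QSystem (Agent Cmd d : Type) where
  ρ0 : Matrix d d ℂ
  A : Set Agent
  C : Set Cmd
  Ecmd : Agent → Cmd → Matrix d d ℂ → Matrix d d ℂ
  M : Agent → Set (PMeas d)

/-- Well-formedness: the initial state is a density operator, commands act as
super-operators, and agents measure with POVMs. -/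
def QSystem.WellFormed {Agent Cmd d : Type} [Fintype d] [DecidableEq d]
    (S : QSystem Agent Cmd d) : Prop :=
  IsDensity S.ρ0 ∧ (∀ a ∈ S.A, ∀ c ∈ S.C, IsSuperOp (S.Ecmd a c)) ∧
    (∀ a ∈ S.A, ∀ P ∈ S.M a, P.IsPOVM)

/-- Execution of a finite action sequence (composition of super-operators, in order). -/
def QSystem.run {Agent Cmd d : Type} (S : QSystem Agent Cmd d)
    (α : List (Agent × Cmd)) (ρ : Matrix d d ℂ) : Matrix d d ℂ :=
  α.foldl (fun τ p => S.Ecmd p.1 p.2 τ) ρ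

/-- A sequence over A × C. -/
def QSystem.Valid {Agent Cmd d : Type} (S : QSystem Agent Cmd d)
    (α : List (Agent × Cmd)) : Prop :=
  ∀ p ∈ α, p.1 ∈ S.A ∧ p.2 ∈ S.C

/-- `purge G D α` deletes from `α` every pair `(a, c)` with `a ∈ G` and `c ∈ D`. -/
def purge {Agent Cmd : Type} (G : Set Agent) (D : Set Cmd) :
    List (Agent × Cmd) → List (Agent × Cmd)
  | [] => []
  | p :: rest => if p.1 ∈ G ∧ p.2 ∈ D then purge G D rest else p :: purge G D rest

/-- A reachable density operator. -/
def QSystem.Reachable {Agent Cmd d : Type} (S : QSystem Agent Cmd d)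
    (ρ : Matrix d d ℂ) : Prop :=
  ∃ α, S.Valid α ∧ S.run α S.ρ0 = ρ

/-- `∇ a`: the set of agents from which information may not flow to `a`. -/
def nabla {Agent : Type} (pol : Agent → Agent → Prop) (a : Agent) : Set Agent :=
  { b | ¬ pol b a }

/-- The security degree `K(𝕊,↝)`. -/
def Kdeg {Agent Cmd d : Type} [Fintype d] (S : QSystem Agent Cmd d)
    (pol : Agent → Agent → Prop) : ℝ :=
  sSup { x | ∃ a ∈ S.A, ∃ α, S.Valid α ∧
    x = dM (S.M a) (S.run α S.ρ0) (S.run (purge (nabla pol a) Set.univ α) S.ρ0) }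

/-- The `t`-bounded security degree `K_t(𝕊,↝)`. -/
def Kt {Agent Cmd d : Type} [Fintype d] (S : QSystem Agent Cmd d)
    (pol : Agent → Agent → Prop) (t : ℕ) : ℝ :=
  sSup { x | ∃ a ∈ S.A, ∃ α, S.Valid α ∧ α.length ≤ t ∧
    x = dM (S.M a) (S.run α S.ρ0) (S.run (purge (nabla pol a) Set.univ α) S.ρ0) }

/-- The interference degree `Int(G₁, D | G₂)`. -/
def IntDeg {Agent Cmd d : Type} [Fintype d] (S : QSystem Agent Cmd d)
    (G1 : Set Agent) (D : Set Cmd) (G2 : Set Agent) : ℝ :=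
  sSup { x | ∃ a ∈ G2, ∃ α, S.Valid α ∧
    x = dM (S.M a) (S.run α S.ρ0) (S.run (purge G1 D α) S.ρ0) }

/-- Trace distance `d(ρ,σ) = (1/2)·tr √((ρ−σ)†(ρ−σ))`. -/
def traceDist {d : Type} [Fintype d] [DecidableEq d] (ρ σ : Matrix d d ℂ) : ℝ :=
  (1 / 2) * (((Matrix.posSemidef_conjTranspose_mul_self (ρ - σ)).1.eigenvectorUnitary.1 *
    diagonal (fun i => ((Real.sqrt ((Matrix.posSemidef_conjTranspose_mul_self (ρ - σ)).1.eigenvalues i) : ℝ) : ℂ)) *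
    (star (Matrix.posSemidef_conjTranspose_mul_self (ρ - σ)).1.eigenvectorUnitary : Matrix d d ℂ)).trace).re

end
noncomputable section

/-- **Unwinding II.** Approximate step consistency, approximate observation consistency
and approximate local respect of the policy bound the `t`-bounded security degree by
`ε_o + t·max{ε_s, ε_l}`. -/
theorem unwinding_II {Agent Cmd d : Type} [Fintype d] [DecidableEq d] [Nonempty d]
    (S : QSystem Agent Cmd d) (hS : S.WellFormed)
    (pol : Agent → Agent → Prop) (hpol : ∀ a ∈ S.A, pol a a)
    (εs εo εl : ℝ) (hεs : 0 ≤ εs) (hεo : 0 ≤ εo) (hεl : 0 ≤ εl) (t : ℕ)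
    (δ : Agent → Matrix d d ℂ → Matrix d d ℂ → ℝ)
    (hnonneg : ∀ a ∈ S.A, ∀ ρ σ, S.Reachable ρ → S.Reachable σ → 0 ≤ δ a ρ σ)
    (hdiag : ∀ a ∈ S.A, ∀ ρ, S.Reachable ρ → δ a ρ ρ = 0)
    (hsym : ∀ a ∈ S.A, ∀ ρ σ, S.Reachable ρ → S.Reachable σ → δ a ρ σ = δ a σ ρ)
    (htri : ∀ a ∈ S.A, ∀ ρ σ τ, S.Reachable ρ → S.Reachable σ → S.Reachable τ →
      δ a ρ τ ≤ δ a ρ σ + δ a σ τ)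
    (hstep : ∀ a ∈ S.A, ∀ b ∈ S.A, ∀ c ∈ S.C, ∀ ρ σ, S.Reachable ρ → S.Reachable σ →
      δ a (S.Ecmd b c ρ) (S.Ecmd b c σ) ≤ δ a ρ σ + εs)
    (hobs : ∀ a ∈ S.A, ∀ ρ σ, S.Reachable ρ → S.Reachable σ →
      dM (S.M a) ρ σ ≤ δ a ρ σ + εo)
    (hlocal : ∀ a ∈ S.A, ∀ b ∈ S.A, ¬ pol b a → ∀ c ∈ S.C, ∀ ρ, S.Reachable ρ →
      δ a ρ (S.Ecmd b c ρ) ≤ εl) :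
    Kt S pol t ≤ εo + t * max εs εl := by
  -- run of a reachable state is reachable
  have hreach : ∀ α, S.Valid α → ∀ ρ, S.Reachable ρ → S.Reachable (S.run α ρ) := by
    intro α hα ρ ⟨β, hβ, hβρ⟩
    refine ⟨β ++ α, ?_, ?_⟩
    · intro p hp
      rcases List.mem_append.1 hp with h | h
      · exact hβ p h
      · exact hα p h
    · simp only [QSystem.run] at *
      rw [List.foldl_append, hβρ]
  have hρ0 : S.Reachable S.ρ0 := ⟨[], by intro p hp; simp at hp, rfl⟩
  have hEreach : ∀ b ∈ S.A, ∀ c ∈ S.C, ∀ ρ, S.Reachable ρ → S.Reachable (S.Ecmd b c ρ) := by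
    intro b hb c hc ρ hρ
    have := hreach [(b, c)] (by intro p hp; simp at hp; simp [hp, hb, hc]) ρ hρ
    simpa [QSystem.run] using this
  -- purge preserves validity
  have hpurge_valid : ∀ (G : Set Agent) α, S.Valid α → S.Valid (purge G Set.univ α) := by
    intro G α hα
    have hsub : ∀ β : List (Agent × Cmd), ∀ p ∈ purge G Set.univ β, p ∈ β := by
      intro β
      induction β with
      | nil => intro p hp; simpa [purge] using hp
      | cons q β ih =>
        intro p hp
        by_cases h : q.1 ∈ G ∧ q.2 ∈ Set.univ
        · simp only [purge, if_pos h] at hp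
          exact List.mem_cons_of_mem _ (ih p hp)
        · simp only [purge, if_neg h] at hp
          rcases List.mem_cons.1 hp with h' | h'
          · exact h' ▸ List.mem_cons_self
          · exact List.mem_cons_of_mem _ (ih p h')
    intro p hp
    exact hα p (hsub α p hp)
  -- key unwinding lemma
  have key : ∀ a ∈ S.A, ∀ α, S.Valid α → ∀ ρ σ, S.Reachable ρ → S.Reachable σ →
      δ a (S.run α ρ) (S.run (purge (nabla pol a) Set.univ α) σ)
        ≤ δ a ρ σ + α.length * max εs εl := by
    intro a ha α
    induction α with
    | nil =>
      intro _ ρ σ hρ hσ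
      simp [QSystem.run, purge]
    | cons p α ih =>
      intro hval ρ σ hρ hσ
      have hp : p.1 ∈ S.A ∧ p.2 ∈ S.C := hval p List.mem_cons_self
      have hval' : S.Valid α := fun q hq => hval q (List.mem_cons_of_mem _ hq)
      have hEρ : S.Reachable (S.Ecmd p.1 p.2 ρ) := hEreach p.1 hp.1 p.2 hp.2 ρ hρ
      have hrun : S.run (p :: α) ρ = S.run α (S.Ecmd p.1 p.2 ρ) := rfl
      have hlen : ((p :: α).length : ℝ) = (α.length : ℝ) + 1 := by
        push_cast [List.length_cons]; ring
      by_cases hba : pol p.1 a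
      · -- p is kept by purge
        have hEσ : S.Reachable (S.Ecmd p.1 p.2 σ) := hEreach p.1 hp.1 p.2 hp.2 σ hσ
        have hG : ¬ (p.1 ∈ nabla pol a ∧ p.2 ∈ Set.univ) :=
          fun h => h.1 hba
        have hpurge : purge (nabla pol a) Set.univ (p :: α)
            = p :: purge (nabla pol a) Set.univ α := by
          simp only [purge, if_neg hG]
        rw [hrun, hpurge]
        have h1 := ih hval' (S.Ecmd p.1 p.2 ρ) (S.Ecmd p.1 p.2 σ) hEρ hEσ
        have h2 := hstep a ha p.1 hp.1 p.2 hp.2 ρ σ hρ hσ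
        have h3 : εs ≤ max εs εl := le_max_left _ _
        have : S.run (p :: purge (nabla pol a) Set.univ α) σ
            = S.run (purge (nabla pol a) Set.univ α) (S.Ecmd p.1 p.2 σ) := rfl
        rw [this, hlen]
        nlinarith [h1, h2, h3, Nat.cast_nonneg (α := ℝ) α.length]
      · -- p is purged
        have hG : p.1 ∈ nabla pol a ∧ p.2 ∈ Set.univ := ⟨hba, Set.mem_univ _⟩
        have hpurge : purge (nabla pol a) Set.univ (p :: α)
            = purge (nabla pol a) Set.univ α := by
          simp only [purge, if_pos hG]
        rw [hrun, hpurge]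
        have h1 := ih hval' (S.Ecmd p.1 p.2 ρ) σ hEρ hσ
        have h2 := hlocal a ha p.1 hp.1 hba p.2 hp.2 ρ hρ
        have h2' : δ a (S.Ecmd p.1 p.2 ρ) ρ ≤ εl := by
          rw [hsym a ha _ _ hEρ hρ]; exact h2
        have h3 := htri a ha (S.Ecmd p.1 p.2 ρ) ρ σ hEρ hρ hσ
        have h4 : εl ≤ max εs εl := le_max_right _ _
        rw [hlen]
        nlinarith [h1, h2', h3, h4, Nat.cast_nonneg (α := ℝ) α.length]
  -- conclude
  have hmax : (0:ℝ) ≤ max εs εl := le_trans hεs (le_max_left _ _)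
  have hbound : 0 ≤ εo + t * max εs εl := by positivity
  refine Real.sSup_le ?_ hbound
  rintro x ⟨a, ha, α, hval, hlent, rfl⟩
  have hr1 : S.Reachable (S.run α S.ρ0) := hreach α hval S.ρ0 hρ0
  have hr2 : S.Reachable (S.run (purge (nabla pol a) Set.univ α) S.ρ0) :=
    hreach _ (hpurge_valid _ α hval) S.ρ0 hρ0
  have h1 := hobs a ha _ _ hr1 hr2
  have h2 := key a ha α hval S.ρ0 S.ρ0 hρ0 hρ0
  rw [hdiag a ha S.ρ0 hρ0] at h2
  have h3 : (α.length : ℝ) * max εs εl ≤ (t : ℝ) * max εs εl := by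
    apply mul_le_mul_of_nonneg_right _ hmax
    exact_mod_cast hlent
  linarith

end
end

section
/- (Weak completeness of Unwinding II) For each agent a ∈ A define δ_a(ρ,σ) = sup{ d_a(𝓔_α(ρ), 𝓔_α(σ)) : α a finite sequence over A×C } on reachable density operators. Then each δ_a is a pseudo-distance satisfying: (step consistency) δ_a(𝓔_{b,c}(ρ), 𝓔_{b,c}(σ)) ≤ δ_a(ρ,σ) for all b ∈ A, c ∈ C; (observation consistency) d_a(ρ,σ) ≤ δ_a(ρ,σ); and moreover K(𝕊,↝) ≥ (1/2)·sup{ δ_a(ρ, 𝓔_{b,c}(ρ)) : a ∈ A, ¬(b ↝ a), c ∈ C, ρ reachable }. -/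
open scoped Classical ComplexOrder
open Matrix Kronecker

noncomputable section

set_option linter.unusedSectionVars false

namespace WCAux

open Matrix

variable {Agent Cmd d : Type} [Fintype d] [DecidableEq d]

lemma trace_nonneg {A : Matrix d d ℂ} (hA : A.PosSemidef) : 0 ≤ A.trace := by
  rw [Matrix.trace]
  apply Finset.sum_nonneg
  intro i _
  exact hA.diag_nonneg

lemma trace_mul_nonneg {E ρ : Matrix d d ℂ}
    (hE : E.PosSemidef) (hρ : ρ.PosSemidef) : 0 ≤ (E * ρ).trace := by
  obtain ⟨X, hXsa, -, hX⟩ := by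
    open scoped MatrixOrder in
    exact CFC.exists_sqrt_of_isSelfAdjoint_of_quasispectrumRestricts hE.isHermitian
      (QuasispectrumRestricts.nnreal_of_nonneg hE.nonneg)
  have h1 : E * ρ = X * (X * ρ) := by subst hX; exact mul_assoc _ _ _
  rw [h1, Matrix.trace_mul_comm]
  have h3 : (Xᴴ * ρ * X).PosSemidef := hρ.conjTranspose_mul_mul_same X
  rw [show X * ρ = Xᴴ * ρ by rw [← Matrix.star_eq_conjTranspose, hXsa.star_eq]]
  exact trace_nonneg h3

lemma cabs_of_nonneg {z : ℂ} (h : 0 ≤ z) : ‖z‖ = z.re := by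
  obtain ⟨h1, h2⟩ := Complex.nonneg_iff.mp h
  have hz : z = (z.re : ℂ) := Complex.ext rfl h2.symm
  rw [hz, Complex.norm_real, Real.norm_of_nonneg h1]
  rfl

lemma dE_nonneg (P : PMeas d) (ρ σ : Matrix d d ℂ) : 0 ≤ dE P ρ σ := by
  apply mul_nonneg (by norm_num)
  exact Finset.sum_nonneg fun i _ => norm_nonneg _

lemma dE_symm (P : PMeas d) (ρ σ : Matrix d d ℂ) : dE P ρ σ = dE P σ ρ := by
  unfold dE
  congr 1
  exact Finset.sum_congr rfl fun i _ => norm_sub_rev _ _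

lemma dE_tri (P : PMeas d) (ρ σ τ : Matrix d d ℂ) :
    dE P ρ τ ≤ dE P ρ σ + dE P σ τ := by
  unfold dE
  rw [← mul_add, ← Finset.sum_add_distrib]
  have h : ∀ i ∈ Finset.univ, ‖(P.E i * ρ).trace - (P.E i * τ).trace‖ ≤
      ‖(P.E i * ρ).trace - (P.E i * σ).trace‖ +
      ‖(P.E i * σ).trace - (P.E i * τ).trace‖ :=
    fun i _ => norm_sub_le_norm_sub_add_norm_sub _ _ _
  have := Finset.sum_le_sum h
  linarith

lemma sum_trace_povm {P : PMeas d} (hP : P.IsPOVM) {ρ : Matrix d d ℂ}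
    (hρ : IsDensity ρ) : ∑ i, (P.E i * ρ).trace = 1 := by
  have : ∑ i, (P.E i * ρ).trace = ((∑ i, P.E i) * ρ).trace := by
    rw [Finset.sum_mul, Matrix.trace_sum]
  rw [this, hP.2, one_mul, hρ.2]

lemma dE_le_one {P : PMeas d} (hP : P.IsPOVM) {ρ σ : Matrix d d ℂ}
    (hρ : IsDensity ρ) (hσ : IsDensity σ) : dE P ρ σ ≤ 1 := by
  unfold dE
  have hbound : ∀ i ∈ Finset.univ,
      ‖(P.E i * ρ).trace - (P.E i * σ).trace‖ ≤
      ((P.E i * ρ).trace).re + ((P.E i * σ).trace).re := by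
    intro i _
    have h1 : ‖(P.E i * ρ).trace - (P.E i * σ).trace‖ ≤
        ‖(P.E i * ρ).trace‖ + ‖(P.E i * σ).trace‖ := by
      exact norm_sub_le _ _
    rwa [cabs_of_nonneg (trace_mul_nonneg (hP.1 i) hρ.1),
      cabs_of_nonneg (trace_mul_nonneg (hP.1 i) hσ.1)] at h1
  have h2 := Finset.sum_le_sum hbound
  rw [Finset.sum_add_distrib, ← Complex.re_sum, ← Complex.re_sum,
    sum_trace_povm hP hρ, sum_trace_povm hP hσ] at h2
  simp only [Complex.one_re] at h2
  linarith

lemma dM_nonneg (M : Set (PMeas d)) (ρ σ : Matrix d d ℂ) : 0 ≤ dM M ρ σ :=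
  Real.sSup_nonneg (by rintro x ⟨P, _, rfl⟩; exact dE_nonneg P ρ σ)

lemma dM_le_one {M : Set (PMeas d)} (hM : ∀ P ∈ M, P.IsPOVM) {ρ σ : Matrix d d ℂ}
    (hρ : IsDensity ρ) (hσ : IsDensity σ) : dM M ρ σ ≤ 1 :=
  Real.sSup_le (by rintro x ⟨P, hPM, rfl⟩; exact dE_le_one (hM P hPM) hρ hσ) zero_le_one

lemma dE_le_dM {M : Set (PMeas d)} (hM : ∀ P ∈ M, P.IsPOVM) {ρ σ : Matrix d d ℂ}
    (hρ : IsDensity ρ) (hσ : IsDensity σ) {P : PMeas d} (hPM : P ∈ M) :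
    dE P ρ σ ≤ dM M ρ σ :=
  le_csSup ⟨1, by rintro x ⟨Q, hQM, rfl⟩; exact dE_le_one (hM Q hQM) hρ hσ⟩ ⟨P, hPM, rfl⟩

lemma dM_symm (M : Set (PMeas d)) (ρ σ : Matrix d d ℂ) : dM M ρ σ = dM M σ ρ := by
  unfold dM
  congr 1
  ext x
  constructor
  · rintro ⟨P, hP, rfl⟩; exact ⟨P, hP, dE_symm P ρ σ⟩
  · rintro ⟨P, hP, rfl⟩; exact ⟨P, hP, dE_symm P σ ρ⟩

lemma dM_tri {M : Set (PMeas d)} (hM : ∀ P ∈ M, P.IsPOVM) {ρ σ τ : Matrix d d ℂ}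
    (hρ : IsDensity ρ) (hσ : IsDensity σ) (hτ : IsDensity τ) :
    dM M ρ τ ≤ dM M ρ σ + dM M σ τ := by
  apply Real.sSup_le
  · rintro x ⟨P, hPM, rfl⟩
    calc dE P ρ τ ≤ dE P ρ σ + dE P σ τ := dE_tri P ρ σ τ
      _ ≤ dM M ρ σ + dM M σ τ :=
        add_le_add (dE_le_dM hM hρ hσ hPM) (dE_le_dM hM hσ hτ hPM)
  · exact add_nonneg (dM_nonneg M ρ σ) (dM_nonneg M σ τ)

lemma run_cons (S : QSystem Agent Cmd d) (p : Agent × Cmd) (α : List (Agent × Cmd))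
    (ρ : Matrix d d ℂ) : S.run (p :: α) ρ = S.run α (S.Ecmd p.1 p.2 ρ) := rfl

lemma run_append (S : QSystem Agent Cmd d) (α β : List (Agent × Cmd))
    (ρ : Matrix d d ℂ) : S.run (α ++ β) ρ = S.run β (S.run α ρ) :=
  List.foldl_append

lemma density_run (S : QSystem Agent Cmd d) (hS : S.WellFormed)
    {α : List (Agent × Cmd)} (hα : S.Valid α) {ρ : Matrix d d ℂ} (hρ : IsDensity ρ) :
    IsDensity (S.run α ρ) := by
  induction α generalizing ρ with
  | nil => exact hρ
  | cons p α ih =>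
    have hp := hα p (List.mem_cons_self)
    have hsub : S.Valid α := fun q hq => hα q (List.mem_cons_of_mem _ hq)
    have hOp := hS.2.1 p.1 hp.1 p.2 hp.2
    exact ih hsub ⟨hOp.2.1 ρ hρ.1, by rw [hOp.2.2, hρ.2]⟩

lemma reach_density (S : QSystem Agent Cmd d) (hS : S.WellFormed)
    {ρ : Matrix d d ℂ} (h : S.Reachable ρ) : IsDensity ρ := by
  obtain ⟨α, hα, rfl⟩ := h
  exact density_run S hS hα hS.1

lemma purge_valid (S : QSystem Agent Cmd d) (G : Set Agent) (D : Set Cmd)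
    {α : List (Agent × Cmd)} (hα : S.Valid α) : S.Valid (purge G D α) := by
  induction α with
  | nil => simpa [purge] using hα
  | cons p α ih =>
    have hsub : S.Valid α := fun q hq => hα q (List.mem_cons_of_mem _ hq)
    by_cases h : p.1 ∈ G ∧ p.2 ∈ D
    · simpa [purge, h] using ih hsub
    · intro q hq
      simp only [purge, if_neg h, List.mem_cons] at hq
      rcases hq with rfl | hq
      · exact hα q (List.mem_cons_self)
      · exact ih hsub q hq

lemma purge_append (G : Set Agent) (D : Set Cmd) (α β : List (Agent × Cmd)) :
    purge G D (α ++ β) = purge G D α ++ purge G D β := by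
  induction α with
  | nil => simp [purge]
  | cons p α ih =>
    by_cases h : p.1 ∈ G ∧ p.2 ∈ D <;> simp [purge, h, ih]

end WCAux

/-- **Weak completeness of Unwinding II.** The canonical family
`δ_a(ρ,σ) = sup_α d_a(𝓔_α(ρ), 𝓔_α(σ))` is a pseudo-distance on reachable density
operators satisfying step consistency and observation consistency, and
`K(𝕊,↝) ≥ (1/2)·sup{ δ_a(ρ, 𝓔_{b,c}(ρ)) : a ∈ A, ¬(b ↝ a), c ∈ C, ρ reachable }`. -/
theorem weak_completeness_unwinding_II {Agent Cmd d : Type}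
    [Fintype d] [DecidableEq d] [Nonempty d]
    (S : QSystem Agent Cmd d) (hS : S.WellFormed)
    (pol : Agent → Agent → Prop) (hpol : ∀ a ∈ S.A, pol a a)
    (δ : Agent → Matrix d d ℂ → Matrix d d ℂ → ℝ)
    (hδ : ∀ a ρ σ, δ a ρ σ =
      sSup { x | ∃ α : List (Agent × Cmd), S.Valid α ∧
        x = dM (S.M a) (S.run α ρ) (S.run α σ) }) :
    (∀ a ∈ S.A, ∀ ρ σ, S.Reachable ρ → S.Reachable σ → 0 ≤ δ a ρ σ) ∧
    (∀ a ∈ S.A, ∀ ρ, S.Reachable ρ → δ a ρ ρ = 0) ∧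
    (∀ a ∈ S.A, ∀ ρ σ, S.Reachable ρ → S.Reachable σ → δ a ρ σ = δ a σ ρ) ∧
    (∀ a ∈ S.A, ∀ ρ σ τ, S.Reachable ρ → S.Reachable σ → S.Reachable τ →
      δ a ρ τ ≤ δ a ρ σ + δ a σ τ) ∧
    (∀ a ∈ S.A, ∀ b ∈ S.A, ∀ c ∈ S.C, ∀ ρ σ, S.Reachable ρ → S.Reachable σ →
      δ a (S.Ecmd b c ρ) (S.Ecmd b c σ) ≤ δ a ρ σ) ∧
    (∀ a ∈ S.A, ∀ ρ σ, S.Reachable ρ → S.Reachable σ → dM (S.M a) ρ σ ≤ δ a ρ σ) ∧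
    Kdeg S pol ≥ (1 / 2) * sSup { x | ∃ a ∈ S.A, ∃ b ∈ S.A, ¬ pol b a ∧
      ∃ c ∈ S.C, ∃ ρ, S.Reachable ρ ∧ x = δ a ρ (S.Ecmd b c ρ) } := by
  classical
  have hρ0 : IsDensity S.ρ0 := hS.1
  have hPOV : ∀ a ∈ S.A, ∀ P ∈ S.M a, P.IsPOVM := hS.2.2
  have hden : ∀ {ρ : Matrix d d ℂ}, S.Reachable ρ → IsDensity ρ :=
    fun h => WCAux.reach_density S hS h
  have hbdd : ∀ a ∈ S.A, ∀ {ρ σ : Matrix d d ℂ}, IsDensity ρ → IsDensity σ →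
      BddAbove { x | ∃ α : List (Agent × Cmd), S.Valid α ∧
        x = dM (S.M a) (S.run α ρ) (S.run α σ) } := by
    intro a ha ρ σ hρ hσ
    refine ⟨1, ?_⟩
    rintro x ⟨α, hα, rfl⟩
    exact WCAux.dM_le_one (hPOV a ha) (WCAux.density_run S hS hα hρ)
      (WCAux.density_run S hS hα hσ)
  have hδnn : ∀ a (ρ σ : Matrix d d ℂ), 0 ≤ δ a ρ σ := by
    intro a ρ σ; rw [hδ]
    exact Real.sSup_nonneg (by rintro x ⟨α, hα, rfl⟩; exact WCAux.dM_nonneg _ _ _)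
  refine ⟨fun a _ ρ σ _ _ => hδnn a ρ σ, ?_, ?_, ?_, ?_, ?_, ?_⟩
  · -- δ a ρ ρ = 0
    intro a ha ρ hρ
    rw [hδ]
    apply le_antisymm
    · apply Real.sSup_le _ le_rfl
      rintro x ⟨α, hα, rfl⟩
      apply Real.sSup_le _ le_rfl
      rintro y ⟨P, hPM, rfl⟩
      simp [dE, sub_self]
    · exact Real.sSup_nonneg (by rintro x ⟨α, hα, rfl⟩; exact WCAux.dM_nonneg _ _ _)
  · -- symmetry
    intro a ha ρ σ hρ hσ
    rw [hδ, hδ]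
    congr 1
    ext x
    constructor
    · rintro ⟨α, hα, rfl⟩; exact ⟨α, hα, WCAux.dM_symm _ _ _⟩
    · rintro ⟨α, hα, rfl⟩; exact ⟨α, hα, WCAux.dM_symm _ _ _⟩
  · -- triangle
    intro a ha ρ σ τ hρ hσ hτ
    rw [hδ a ρ τ]
    apply Real.sSup_le
    · rintro x ⟨α, hα, rfl⟩
      have h1 := WCAux.dM_tri (M := S.M a) (hPOV a ha)
        (WCAux.density_run S hS hα (hden hρ)) (WCAux.density_run S hS hα (hden hσ))
        (WCAux.density_run S hS hα (hden hτ))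
      have h2 : dM (S.M a) (S.run α ρ) (S.run α σ) ≤ δ a ρ σ := by
        rw [hδ]; exact le_csSup (hbdd a ha (hden hρ) (hden hσ)) ⟨α, hα, rfl⟩
      have h3 : dM (S.M a) (S.run α σ) (S.run α τ) ≤ δ a σ τ := by
        rw [hδ]; exact le_csSup (hbdd a ha (hden hσ) (hden hτ)) ⟨α, hα, rfl⟩
      linarith
    · exact add_nonneg (hδnn a ρ σ) (hδnn a σ τ)
  · -- step consistency
    intro a ha b hb c hc ρ σ hρ hσ
    rw [hδ a (S.Ecmd b c ρ)]
    apply Real.sSup_le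
    · rintro x ⟨α, hα, rfl⟩
      have hval : S.Valid ((b, c) :: α) := by
        intro q hq
        rcases List.mem_cons.mp hq with rfl | hq
        · exact ⟨hb, hc⟩
        · exact hα q hq
      rw [hδ]
      exact le_csSup (hbdd a ha (hden hρ) (hden hσ)) ⟨(b, c) :: α, hval, rfl⟩
    · exact hδnn a ρ σ
  · -- observation consistency
    intro a ha ρ σ hρ hσ
    rw [hδ]
    exact le_csSup (hbdd a ha (hden hρ) (hden hσ))
      ⟨[], by intro q hq; simp at hq, rfl⟩
  · -- K bound
    rw [ge_iff_le]
    have hKnn : 0 ≤ Kdeg S pol :=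
      Real.sSup_nonneg (by rintro x ⟨a, ha, α, hα, rfl⟩; exact WCAux.dM_nonneg _ _ _)
    have hKbdd : BddAbove { x | ∃ a ∈ S.A, ∃ α, S.Valid α ∧
        x = dM (S.M a) (S.run α S.ρ0) (S.run (purge (nabla pol a) Set.univ α) S.ρ0) } := by
      refine ⟨1, ?_⟩
      rintro x ⟨a, ha, α, hα, rfl⟩
      exact WCAux.dM_le_one (hPOV a ha) (WCAux.density_run S hS hα hρ0)
        (WCAux.density_run S hS (WCAux.purge_valid S _ _ hα) hρ0)
    have hmain : sSup { x | ∃ a ∈ S.A, ∃ b ∈ S.A, ¬ pol b a ∧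
        ∃ c ∈ S.C, ∃ ρ, S.Reachable ρ ∧ x = δ a ρ (S.Ecmd b c ρ) } ≤ 2 * Kdeg S pol := by
      apply Real.sSup_le _ (by linarith)
      rintro x ⟨a, ha, b, hb, hba, c, hc, ρ, hreach, rfl⟩
      obtain ⟨β, hβ, hβρ⟩ := hreach
      subst hβρ
      rw [hδ]
      apply Real.sSup_le _ (by linarith)
      rintro y ⟨α, hα, rfl⟩
      have hbG : b ∈ nabla pol a := hba
      have hvγ' : S.Valid (β ++ α) := fun q hq =>
        (List.mem_append.mp hq).elim (hβ q) (hα q)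
      have hvγ : S.Valid (β ++ (b, c) :: α) := by
        intro q hq
        rcases List.mem_append.mp hq with hq | hq
        · exact hβ q hq
        · rcases List.mem_cons.mp hq with rfl | hq
          · exact ⟨hb, hc⟩
          · exact hα q hq
      have hpurgeq : purge (nabla pol a) Set.univ (β ++ (b, c) :: α)
          = purge (nabla pol a) Set.univ (β ++ α) := by
        rw [WCAux.purge_append, WCAux.purge_append]
        congr 1
        show purge (nabla pol a) Set.univ ((b, c) :: α) = purge (nabla pol a) Set.univ α
        simp [purge, hbG]
      have hX : S.run (β ++ α) S.ρ0 = S.run α (S.run β S.ρ0) := WCAux.run_append S β α _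
      have hZ : S.run (β ++ (b, c) :: α) S.ρ0
          = S.run α (S.Ecmd b c (S.run β S.ρ0)) := by
        rw [WCAux.run_append]; rfl
      set Y := S.run (purge (nabla pol a) Set.univ (β ++ α)) S.ρ0 with hY
      have hXden : IsDensity (S.run (β ++ α) S.ρ0) := WCAux.density_run S hS hvγ' hρ0
      have hZden : IsDensity (S.run (β ++ (b, c) :: α) S.ρ0) :=
        WCAux.density_run S hS hvγ hρ0
      have hYden : IsDensity Y :=
        WCAux.density_run S hS (WCAux.purge_valid S _ _ hvγ') hρ0
      have h1 : dM (S.M a) (S.run (β ++ α) S.ρ0) Y ≤ Kdeg S pol :=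
        le_csSup hKbdd ⟨a, ha, β ++ α, hvγ', rfl⟩
      have h2 : dM (S.M a) (S.run (β ++ (b, c) :: α) S.ρ0) Y ≤ Kdeg S pol :=
        le_csSup hKbdd ⟨a, ha, β ++ (b, c) :: α, hvγ, by rw [hY, hpurgeq]⟩
      have htri := WCAux.dM_tri (M := S.M a) (hPOV a ha) hXden hYden hZden
      have hsym : dM (S.M a) Y (S.run (β ++ (b, c) :: α) S.ρ0)
          = dM (S.M a) (S.run (β ++ (b, c) :: α) S.ρ0) Y := WCAux.dM_symm _ _ _
      rw [← hX, ← hZ]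
      rw [hsym] at htri
      linarith
    linarith

end
end
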